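/- For every 2 ≤ k ≤ K one has the identity η̃_k − η̃_{k−1} = (√(η̃_k) + √(η̃_{k−1})) · √(P̄_k)|h_k| · J(k)/(S_k · S_{k−1}). In particular, η̃_k − η̃_{k−1} and J(k) have the same sign. (identity (51) in the proof of Lemma 3) -/
import Mathlib


/-- **identity (51) in the proof of Lemma 3.** For every `2 ≤ k ≤ K`:
`η̃_k − η̃_{k−1} = (√(η̃_k) + √(η̃_{k−1})) · √(P̄_k)|h_k| · J(k)/(S_k · S_{k−1})`;
in particular `η̃_k − η̃_{k−1}` and `J(k)` have the same sign. -/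
theorem stmt8
    (K : ℕ) (hK : 1 ≤ K) (P h : ℕ → ℝ) (σ2 : ℝ)
    (hP : ∀ k, 1 ≤ k → k ≤ K → 0 < P k)
    (hh : ∀ k, 1 ≤ k → k ≤ K → 0 < h k)
    (hσ2 : 0 < σ2)
    (hord : ∀ k, 1 ≤ k → k < K → P k * (h k) ^ 2 ≤ P (k + 1) * (h (k + 1)) ^ 2)
    (S ηt J : ℕ → ℝ)
    (hS : ∀ k, S k = ∑ i ∈ Finset.Icc 1 k, Real.sqrt (P i) * h i)
    (hηt : ∀ k, ηt k = ((σ2 + ∑ i ∈ Finset.Icc 1 k, P i * (h i) ^ 2) / S k) ^ 2)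
    (hJ : ∀ k, J k = (∑ i ∈ Finset.Icc 1 (k - 1),
      Real.sqrt (P i) * h i * (Real.sqrt (P k) * h k - Real.sqrt (P i) * h i)) - σ2) :
    ∀ k, 2 ≤ k → k ≤ K →
      (ηt k - ηt (k - 1)
        = (Real.sqrt (ηt k) + Real.sqrt (ηt (k - 1))) * (Real.sqrt (P k) * h k)
            * (J k / (S k * S (k - 1)))) ∧
      (0 ≤ ηt k - ηt (k - 1) ↔ 0 ≤ J k) := by
  intro k hk2 hkK
  obtain ⟨m, rfl⟩ : ∃ m, k = m + 1 := ⟨k - 1, (Nat.succ_pred_eq_of_pos (by omega)).symm⟩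
  have hm1 : 1 ≤ m := by omega
  have hmK : m ≤ K := by omega
  simp only [Nat.add_sub_cancel] at *
  set a : ℕ → ℝ := fun i => Real.sqrt (P i) * h i with ha
  have hapos : ∀ i, 1 ≤ i → i ≤ K → 0 < a i := fun i h1 h2 =>
    mul_pos (Real.sqrt_pos.mpr (hP i h1 h2)) (hh i h1 h2)
  have hasq : ∀ i, 1 ≤ i → i ≤ K → a i ^ 2 = P i * h i ^ 2 := fun i h1 h2 => by
    simp only [ha, mul_pow, Real.sq_sqrt (hP i h1 h2).le]
  have hSm : 0 < S m := by
    rw [hS]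
    apply Finset.sum_pos
    · intro i hi
      simp only [Finset.mem_Icc] at hi
      exact hapos i hi.1 (by omega)
    · exact ⟨1, by simp [Finset.mem_Icc]; omega⟩
  have hSk : S (m + 1) = S m + a (m + 1) := by
    rw [hS, hS, Finset.sum_Icc_succ_top (by omega : 1 ≤ m + 1)]
  set Qm : ℝ := ∑ i ∈ Finset.Icc 1 m, P i * h i ^ 2 with hQm
  have hQpos : 0 < Qm := by
    apply Finset.sum_pos
    · intro i hi
      simp only [Finset.mem_Icc] at hi
      exact mul_pos (hP i hi.1 (by omega)) (pow_pos (hh i hi.1 (by omega)) 2)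
    · exact ⟨1, by simp [Finset.mem_Icc]; omega⟩
  set Nm : ℝ := σ2 + Qm with hNm
  have hNmpos : 0 < Nm := by positivity
  set B : ℝ := a (m + 1) with hB
  have hBpos : 0 < B := hapos (m + 1) (by omega) hkK
  have hSkpos : 0 < S (m + 1) := by rw [hSk]; positivity
  have hQk : σ2 + ∑ i ∈ Finset.Icc 1 (m + 1), P i * h i ^ 2 = Nm + B ^ 2 := by
    rw [Finset.sum_Icc_succ_top (by omega : 1 ≤ m + 1), hasq (m + 1) (by omega) hkK]
    ring
  have hJk : J (m + 1) = B * S m - Nm := by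
    rw [hJ]
    simp only [Nat.add_sub_cancel]
    have hcong : ∀ i ∈ Finset.Icc 1 m,
        a i * (a (m + 1) - a i) = B * a i - P i * h i ^ 2 := by
      intro i hi
      simp only [Finset.mem_Icc] at hi
      rw [← hasq i hi.1 (by omega)]
      ring
    rw [Finset.sum_congr rfl hcong, Finset.sum_sub_distrib, ← Finset.mul_sum, ← hS, hNm]
    ring
  have hηm : ηt m = (Nm / S m) ^ 2 := by rw [hηt]
  have hηk : ηt (m + 1) = ((Nm + B ^ 2) / S (m + 1)) ^ 2 := by rw [hηt, hQk]
  have hsm : Real.sqrt (ηt m) = Nm / S m := by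
    rw [hηm, Real.sqrt_sq (by positivity)]
  have hsk : Real.sqrt (ηt (m + 1)) = (Nm + B ^ 2) / S (m + 1) := by
    rw [hηk, Real.sqrt_sq (by positivity)]
  have hSmne : S m ≠ 0 := ne_of_gt hSm
  have hSkne : S (m + 1) ≠ 0 := ne_of_gt hSkpos
  have key : ηt (m + 1) - ηt m
      = (Real.sqrt (ηt (m + 1)) + Real.sqrt (ηt m)) * B * (J (m + 1) / (S (m + 1) * S m)) := by
    rw [hsk, hsm, hηk, hηm, hJk, hSk]
    have hne : S m + B ≠ 0 := by positivity
    field_simp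
    ring
  refine ⟨key, ?_⟩
  rw [key]
  have hC : 0 < (Real.sqrt (ηt (m + 1)) + Real.sqrt (ηt m)) * B / (S (m + 1) * S m) := by
    rw [hsk, hsm]
    positivity
  have hrw : (Real.sqrt (ηt (m + 1)) + Real.sqrt (ηt m)) * B * (J (m + 1) / (S (m + 1) * S m))
      = (Real.sqrt (ηt (m + 1)) + Real.sqrt (ηt m)) * B / (S (m + 1) * S m) * J (m + 1) := by
    ring
  rw [hrw]
  exact ⟨fun hx => nonneg_of_mul_nonneg_right hx hC, fun hx => mul_nonneg hC.le hx⟩
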